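/- For all l ∈ [0, π_2/2], cleaf_2(l)² = (1 - sleaf_2(l)²)/(1 + sleaf_2(l)²), and equivalently sleaf_2(l)² = (1 - cleaf_2(l)²)/(1 + cleaf_2(l)²). -/

import Mathlib

open MeasureTheory intervalIntegral Set Filter Topology

noncomputable def lf (t : ℝ) : ℝ := 1 / Real.sqrt (1 - t ^ 4)

noncomputable def lg (r : ℝ) : ℝ := ∫ t in (0:ℝ)..r, lf t

noncomputable def lphi (s : ℝ) : ℝ := Real.sqrt ((1 - s ^ 2) / (1 + s ^ 2))

lemma lf_meas : Measurable lf :=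
  measurable_const.div (Real.continuous_sqrt.measurable.comp (by fun_prop))

lemma lf_nonneg (t : ℝ) : 0 ≤ lf t := by
  unfold lf; positivity

lemma lf_intable : IntervalIntegrable lf volume 0 1 := by
  have hmaj : IntervalIntegrable (fun t : ℝ => (1 - t) ^ (-(1/2) : ℝ)) volume 0 1 := by
    have := ((intervalIntegrable_rpow' (a := 0) (b := 1) (r := -(1/2))
      (by norm_num)).comp_sub_left 1).symm
    simpa using this
  refine hmaj.mono_fun lf_meas.aestronglyMeasurable ?_
  refine (ae_restrict_iff' measurableSet_uIoc).2 (Filter.Eventually.of_forall fun t ht => ?_)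
  rw [Set.uIoc_of_le (by norm_num : (0:ℝ) ≤ 1)] at ht
  obtain ⟨ht0, ht1⟩ := ht
  have h1t : (0:ℝ) ≤ 1 - t := by linarith
  have hb : (1 - t) ^ (-(1/2) : ℝ) = 1 / Real.sqrt (1 - t) := by
    rw [Real.rpow_neg h1t, ← Real.sqrt_eq_rpow, one_div]
  simp only [Real.norm_eq_abs]
  rw [abs_of_nonneg (lf_nonneg t), abs_of_nonneg (Real.rpow_nonneg h1t _), hb]
  unfold lf
  rcases eq_or_lt_of_le ht1 with h | h
  · subst h; norm_num
  · have hq : (0:ℝ) ≤ 1 + t + t ^ 2 := by positivity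
    have ht4 : t ^ 4 ≤ t := by nlinarith [mul_nonneg (mul_nonneg ht0.le h1t) hq]
    have h4 : 1 - t ≤ 1 - t ^ 4 := by linarith
    have hsq : Real.sqrt (1 - t) ≤ Real.sqrt (1 - t ^ 4) := Real.sqrt_le_sqrt h4
    have hpos : 0 < Real.sqrt (1 - t) := Real.sqrt_pos.2 (by linarith)
    exact one_div_le_one_div_of_le hpos hsq

lemma one_sub_pow4_pos {s : ℝ} (h0 : 0 ≤ s) (h1 : s < 1) : 0 < 1 - s ^ 4 := by
  have a : 0 < 1 - s ^ 2 := by nlinarith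
  nlinarith

lemma lf_contAt {s : ℝ} (h : 1 - s ^ 4 > 0) : ContinuousAt lf s := by
  have hc : ContinuousAt (fun t : ℝ => Real.sqrt (1 - t ^ 4)) s :=
    Real.continuous_sqrt.continuousAt.comp (by fun_prop)
  exact continuousAt_const.div hc (by positivity)

lemma lg_hasDeriv {s : ℝ} (hs0 : 0 ≤ s) (hs1 : s < 1) : HasDerivAt lg (lf s) s := by
  have hsub : Set.uIcc 0 s ⊆ Set.uIcc (0:ℝ) 1 := by
    rw [Set.uIcc_of_le hs0, Set.uIcc_of_le (by norm_num : (0:ℝ) ≤ 1)]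
    exact Set.Icc_subset_Icc le_rfl hs1.le
  have hint : IntervalIntegrable lf volume 0 s := lf_intable.mono_set hsub
  have h4 : 1 - s ^ 4 > 0 := one_sub_pow4_pos hs0 hs1
  exact integral_hasDerivAt_right hint
    lf_meas.stronglyMeasurable.stronglyMeasurableAtFilter (lf_contAt h4)

lemma lg_cont : ContinuousOn lg (Set.Icc 0 1) := by
  have hint : IntegrableOn lf (Set.uIcc 0 1) volume := by
    rw [Set.uIcc_of_le (by norm_num : (0:ℝ) ≤ 1),
      integrableOn_Icc_iff_integrableOn_Ioc]
    exact (intervalIntegrable_iff_integrableOn_Ioc_of_le (by norm_num)).1 lf_intable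
  have := continuousOn_primitive_interval (a := (0:ℝ)) (b := 1) (μ := volume) (f := lf) hint
  rwa [Set.uIcc_of_le (by norm_num : (0:ℝ) ≤ 1)] at this

lemma lg_add {x y : ℝ} (hx : 0 ≤ x) (hxy : x ≤ y) (hy : y ≤ 1) :
    lg x + ∫ t in x..y, lf t = lg y := by
  apply integral_add_adjacent_intervals <;>
    refine lf_intable.mono_set ?_ <;>
    rw [Set.uIcc_of_le (by norm_num : (0:ℝ) ≤ 1)]
  · rw [Set.uIcc_of_le hx]; exact Set.Icc_subset_Icc le_rfl (hxy.trans hy)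
  · rw [Set.uIcc_of_le hxy]; exact Set.Icc_subset_Icc hx hy

lemma lg_strictMono : StrictMonoOn lg (Set.Icc 0 1) := by
  intro x hx y hy hxy
  have key : 0 < ∫ t in x..y, lf t := by
    apply intervalIntegral_pos_of_pos_on
    · refine lf_intable.mono_set ?_
      rw [Set.uIcc_of_le (by norm_num : (0:ℝ) ≤ 1), Set.uIcc_of_le hxy.le]
      exact Set.Icc_subset_Icc hx.1 hy.2
    · intro t ht
      have ht0 : 0 ≤ t := hx.1.trans ht.1.le
      have ht1 : t < 1 := lt_of_lt_of_le ht.2 hy.2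
      have h4 : 0 < 1 - t ^ 4 := one_sub_pow4_pos ht0 ht1
      unfold lf; positivity
    · exact hxy
  have := lg_add hx.1 hxy.le hy.2
  linarith

lemma lphi_sq' {s : ℝ} (hs : s ^ 2 ≤ 1) : lphi s ^ 2 = (1 - s ^ 2) / (1 + s ^ 2) := by
  rw [lphi, Real.sq_sqrt (div_nonneg (by linarith) (by positivity))]

lemma lphi_mem {s : ℝ} (hs0 : 0 ≤ s) (hs1 : s ≤ 1) : lphi s ∈ Set.Icc (0:ℝ) 1 := by
  refine ⟨Real.sqrt_nonneg _, Real.sqrt_le_iff.2 ⟨by norm_num, ?_⟩⟩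
  rw [one_pow, div_le_one (by positivity)]
  nlinarith

lemma lphi_hasDeriv {s : ℝ} (hs0 : 0 < s) (hs1 : s < 1) :
    HasDerivAt lphi
      (1 / (2 * Real.sqrt ((1 - s ^ 2) / (1 + s ^ 2))) * (-4 * s / (1 + s ^ 2) ^ 2)) s := by
  have hu : HasDerivAt (fun x : ℝ => (1 - x ^ 2) / (1 + x ^ 2)) (-4 * s / (1 + s ^ 2) ^ 2) s := by
    have h1 : HasDerivAt (fun x : ℝ => 1 - x ^ 2) (-(2 * s)) s := by
      simpa using (hasDerivAt_pow 2 s).const_sub 1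
    have h2 : HasDerivAt (fun x : ℝ => 1 + x ^ 2) (2 * s) s := by
      simpa using (hasDerivAt_pow 2 s).const_add 1
    have := h1.div h2 (by positivity)
    have this' : HasDerivAt (fun x : ℝ => (1 - x ^ 2) / (1 + x ^ 2))
        ((-(2 * s) * (1 + s ^ 2) - (1 - s ^ 2) * (2 * s)) / (1 + s ^ 2) ^ 2) s := this
    convert this' using 1
    ring
  have hune : (1 - s ^ 2) / (1 + s ^ 2) ≠ 0 := by
    apply div_ne_zero <;> nlinarith
  exact (Real.hasDerivAt_sqrt hune).comp s hu

lemma keyF {s : ℝ} (hs0 : 0 < s) (hs1 : s < 1) :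
    HasDerivAt (fun x => lg x + lg (lphi x)) 0 s := by
  set u : ℝ := (1 - s ^ 2) / (1 + s ^ 2) with hu
  have hA : (0:ℝ) < 1 + s ^ 2 := by positivity
  have hupos : 0 < u := by apply div_pos <;> nlinarith
  have hphipos : 0 < lphi s := Real.sqrt_pos.2 hupos
  have hphilt : lphi s < 1 := by
    rw [lphi, Real.sqrt_lt' one_pos, one_pow, div_lt_one hA]
    nlinarith
  have h1 : HasDerivAt lg (lf s) s := lg_hasDeriv hs0.le hs1
  have h2 : HasDerivAt lg (lf (lphi s)) (lphi s) := lg_hasDeriv hphipos.le hphilt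
  have h3 := h2.comp s (lphi_hasDeriv hs0 hs1)
  have h := h1.add h3
  have h' : HasDerivAt (fun x => lg x + lg (lphi x))
      (lf s + lf (lphi s) * (1 / (2 * Real.sqrt ((1 - s ^ 2) / (1 + s ^ 2))) * (-4 * s / (1 + s ^ 2) ^ 2))) s := h
  convert h' using 1
  have hsqu : lphi s ^ 2 = u := lphi_sq' (by nlinarith)
  have h1mu : 1 - lphi s ^ 4 = (2 * s / (1 + s ^ 2)) ^ 2 := by
    have h44 : lphi s ^ 4 = u ^ 2 := by rw [show (4:ℕ) = 2 * 2 from rfl, pow_mul, hsqu]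
    rw [h44, hu]
    field_simp
    ring
  have hsq1 : Real.sqrt (1 - lphi s ^ 4) = 2 * s / (1 + s ^ 2) := by
    rw [h1mu, Real.sqrt_sq (by positivity)]
  have hsq2 : (1 + s ^ 2) * Real.sqrt u = Real.sqrt (1 - s ^ 4) := by
    rw [← Real.sqrt_sq hA.le, ← Real.sqrt_mul (by positivity), hu]
    congr 1
    field_simp
    ring
  have hsqupos : 0 < Real.sqrt u := Real.sqrt_pos.2 hupos
  have hs4 : 0 < 1 - s ^ 4 := one_sub_pow4_pos hs0.le hs1
  have hsqs4 : 0 < Real.sqrt (1 - s ^ 4) := Real.sqrt_pos.2 hs4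
  show (0:ℝ) = lf s + lf (lphi s) * _
  rw [lf, lf, hsq1, ← hsq2]
  have hbne : Real.sqrt u ≠ 0 := ne_of_gt hsqupos
  have hsne : s ≠ 0 := ne_of_gt hs0
  have hAne : (1 + s ^ 2 : ℝ) ≠ 0 := ne_of_gt hA
  have hgen : ∀ b : ℝ, b ≠ 0 →
      (0:ℝ) = 1 / ((1 + s ^ 2) * b) +
        1 / (2 * s / (1 + s ^ 2)) * (1 / (2 * b) * (-4 * s / (1 + s ^ 2) ^ 2)) := by
    intro b hb
    field_simp
    ring
  exact hgen _ hbne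

lemma keyIdentity : ∀ s ∈ Set.Icc (0:ℝ) 1, lg s + lg (lphi s) = lg 1 := by
  have hlphi_cont : Continuous lphi := by
    unfold lphi
    exact Real.continuous_sqrt.comp ((continuous_const.sub (continuous_pow 2)).div
      (continuous_const.add (continuous_pow 2)) (fun x => by positivity))
  have hF : ContinuousOn (fun x => lg x + lg (lphi x)) (Set.Icc 0 1) := by
    apply lg_cont.add
    exact lg_cont.comp hlphi_cont.continuousOn (fun x hx => lphi_mem hx.1 hx.2)
  have hconst : ∀ x ∈ Set.Ioo (0:ℝ) 1, ∀ y ∈ Set.Ioo (0:ℝ) 1, x ≤ y →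
      lg y + lg (lphi y) = lg x + lg (lphi x) := by
    intro x hx y hy hxy
    have := constant_of_has_deriv_right_zero
      (f := fun x => lg x + lg (lphi x)) (a := x) (b := y)
      (hF.mono (Set.Icc_subset_Icc hx.1.le hy.2.le))
      (fun z hz => ((keyF (lt_of_lt_of_le hx.1 hz.1)
        (lt_of_lt_of_le hz.2 hy.2.le)).hasDerivWithinAt))
    exact this y (Set.right_mem_Icc.2 hxy)
  have hphi0 : lphi 0 = 1 := by rw [lphi]; norm_num
  have hphi1 : lphi 1 = 0 := by rw [lphi]; norm_num
  intro s hs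
  rcases eq_or_lt_of_le hs.1 with h0 | h0
  · rw [← h0, hphi0, lg, intervalIntegral.integral_same]; ring
  rcases eq_or_lt_of_le hs.2 with h1 | h1
  · subst h1
    rw [hphi1, show lg 0 = 0 from intervalIntegral.integral_same]; ring
  have hne : (𝓝[Set.Ioc (0:ℝ) s] 0).NeBot := by
    apply mem_closure_iff_nhdsWithin_neBot.1
    rw [closure_Ioc (ne_of_lt h0)]
    exact ⟨le_rfl, h0.le⟩
  have heq : ∀ x ∈ Set.Ioc (0:ℝ) s, (fun x => lg x + lg (lphi x)) x = lg s + lg (lphi s) := by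
    intro x hx
    exact (hconst x ⟨hx.1, lt_of_le_of_lt hx.2 h1⟩ s ⟨h0, h1⟩ hx.2).symm
  have htend : Tendsto (fun x => lg x + lg (lphi x)) (𝓝[Set.Ioc (0:ℝ) s] 0)
      (𝓝 (lg 0 + lg (lphi 0))) := by
    exact (hF 0 ⟨le_rfl, by norm_num⟩).mono_left
      (nhdsWithin_mono _ (fun x hx => ⟨hx.1.le, hx.2.trans hs.2⟩))
  have htend2 : Tendsto (fun x => lg x + lg (lphi x)) (𝓝[Set.Ioc (0:ℝ) s] 0)
      (𝓝 (lg s + lg (lphi s))) := by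
    apply Tendsto.congr' _ tendsto_const_nhds
    exact eventually_nhdsWithin_of_forall fun x hx => (heq x hx).symm
  have hval := tendsto_nhds_unique htend2 htend
  rw [hval, hphi0, show lg 0 = 0 from intervalIntegral.integral_same]; ring

theorem leaf_sq_relation (π₂ : ℝ) (hπ : π₂ = 2 * ∫ t in (0:ℝ)..1, 1 / Real.sqrt (1 - t ^ 4))
    (sleaf : ℝ → ℝ)
    (hs : ∀ l ∈ Set.Icc 0 (π₂ / 2), sleaf l ∈ Set.Icc (0:ℝ) 1 ∧
      (∫ t in (0:ℝ)..(sleaf l), 1 / Real.sqrt (1 - t ^ 4)) = l)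
    (cleaf : ℝ → ℝ)
    (hc : ∀ l ∈ Set.Icc 0 (π₂ / 2), cleaf l ∈ Set.Icc (0:ℝ) 1 ∧
      (∫ t in (cleaf l)..1, 1 / Real.sqrt (1 - t ^ 4)) = l) :
    ∀ l ∈ Set.Icc 0 (π₂ / 2),
      (cleaf l) ^ 2 = (1 - (sleaf l) ^ 2) / (1 + (sleaf l) ^ 2) ∧
      (sleaf l) ^ 2 = (1 - (cleaf l) ^ 2) / (1 + (cleaf l) ^ 2) := by
  intro l hl
  obtain ⟨hsmem, hsval⟩ := hs l hl
  obtain ⟨hcmem, hcval⟩ := hc l hl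
  set s := sleaf l with hsdef
  set c := cleaf l with hcdef
  have hgs : lg s = l := hsval
  have hintc : (∫ t in c..(1:ℝ), lf t) = l := hcval
  have hsplit : lg c + l = lg 1 := by
    rw [← hintc]
    exact lg_add hcmem.1 hcmem.2 le_rfl
  have hkey := keyIdentity s hsmem
  have h1 : lg c = lg (lphi s) := by linarith
  have hceq : c = lphi s :=
    lg_strictMono.injOn hcmem (lphi_mem hsmem.1 hsmem.2) h1
  have hc2 : c ^ 2 = (1 - s ^ 2) / (1 + s ^ 2) := by
    rw [hceq]
    exact lphi_sq' (by nlinarith [hsmem.1, hsmem.2])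
  refine ⟨hc2, ?_⟩
  have hAne : (1 + s ^ 2 : ℝ) ≠ 0 := by positivity
  have e : c ^ 2 * (1 + s ^ 2) = 1 - s ^ 2 := by
    rw [hc2]; field_simp
  rw [eq_div_iff (by positivity : (1 + c ^ 2 : ℝ) ≠ 0)]
  linear_combination e
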